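/- Let f₁, f₂ : (0,∞) → ℝ be twice differentiable with f₁(1)=f₁'(1)=0, f₂(1)=f₂'(1)=0, f₂''(x) > 0 for all x > 0, and suppose there are constants 0 ≤ α < β with α ≤ f₁''(x)/f₂''(x) ≤ β for all x > 0. Then α·φ_{f₂}(a,b) ≤ φ_{f₁}(a,b) ≤ β·φ_{f₂}(a,b) for all a, b > 0, where φ_f(a,b) = a·f(b/a). -/

import Mathlib

lemma nonneg_aux (h : ℝ → ℝ)
    (hd : DifferentiableOn ℝ h (Set.Ioi 0))
    (hd2 : DifferentiableOn ℝ (deriv h) (Set.Ioi 0))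
    (h1 : h 1 = 0) (h1' : deriv h 1 = 0)
    (hpp : ∀ x : ℝ, 0 < x → 0 ≤ deriv (deriv h) x) :
    ∀ x : ℝ, 0 < x → 0 ≤ h x := by
  have hmono : MonotoneOn (deriv h) (Set.Ioi 0) := by
    apply monotoneOn_of_deriv_nonneg (convex_Ioi 0) hd2.continuousOn
    · rw [interior_Ioi]; exact hd2.mono (by simp)
    · rw [interior_Ioi]; exact fun x hx => hpp x hx
  intro x hx
  rcases le_or_gt 1 x with hx1 | hx1
  · have hm : MonotoneOn h (Set.Ici 1) := by
      apply monotoneOn_of_deriv_nonneg (convex_Ici 1)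
      · exact hd.continuousOn.mono fun y hy => Set.mem_Ioi.mpr (lt_of_lt_of_le zero_lt_one hy)
      · rw [interior_Ici]
        exact hd.mono fun y hy => Set.mem_Ioi.mpr (lt_trans zero_lt_one hy)
      · rw [interior_Ici]
        intro y hy
        have := hmono (Set.mem_Ioi.mpr zero_lt_one)
          (Set.mem_Ioi.mpr (lt_trans zero_lt_one hy)) (le_of_lt hy)
        linarith [h1' ▸ this]
    have := hm (Set.self_mem_Ici) (Set.mem_Ici.mpr hx1) hx1
    linarith [h1 ▸ this]
  · have hm : AntitoneOn h (Set.Ioc 0 1) := by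
      apply antitoneOn_of_deriv_nonpos (convex_Ioc 0 1)
      · exact hd.continuousOn.mono fun y hy => hy.1
      · rw [interior_Ioc]
        exact hd.mono fun y hy => hy.1
      · rw [interior_Ioc]
        intro y hy
        have := hmono (Set.mem_Ioi.mpr hy.1) (Set.mem_Ioi.mpr zero_lt_one) (le_of_lt hy.2)
        linarith [h1' ▸ this]
    have := hm ⟨hx, le_of_lt hx1⟩ ⟨zero_lt_one, le_refl 1⟩ (le_of_lt hx1)
    linarith [h1 ▸ this]

lemma key (f g : ℝ → ℝ) (c : ℝ)
    (hfd : DifferentiableOn ℝ f (Set.Ioi 0))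
    (hfd2 : DifferentiableOn ℝ (deriv f) (Set.Ioi 0))
    (hgd : DifferentiableOn ℝ g (Set.Ioi 0))
    (hgd2 : DifferentiableOn ℝ (deriv g) (Set.Ioi 0))
    (hf1 : f 1 = 0) (hf1' : deriv f 1 = 0)
    (hg1 : g 1 = 0) (hg1' : deriv g 1 = 0)
    (hcc : ∀ x : ℝ, 0 < x → c * deriv (deriv g) x ≤ deriv (deriv f) x) :
    ∀ x : ℝ, 0 < x → c * g x ≤ f x := by
  set h : ℝ → ℝ := fun x => f x - c * g x with hh
  have hd : DifferentiableOn ℝ h (Set.Ioi 0) := hfd.sub (hgd.const_mul c)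
  have hder : ∀ x ∈ Set.Ioi (0:ℝ), deriv h x = deriv f x - c * deriv g x := by
    intro x hx
    have hfx := (hfd x hx).differentiableAt (isOpen_Ioi.mem_nhds hx)
    have hgx := (hgd x hx).differentiableAt (isOpen_Ioi.mem_nhds hx)
    rw [hh]
    rw [deriv_fun_sub hfx (hgx.const_mul c), deriv_const_mul c hgx]
  have hd2 : DifferentiableOn ℝ (deriv h) (Set.Ioi 0) :=
    (hfd2.sub (hgd2.const_mul c)).congr hder
  have hder2 : ∀ x ∈ Set.Ioi (0:ℝ),
      deriv (deriv h) x = deriv (deriv f) x - c * deriv (deriv g) x := by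
    intro x hx
    have heq : deriv h =ᶠ[nhds x] fun y => deriv f y - c * deriv g y :=
      Filter.eventuallyEq_of_mem (isOpen_Ioi.mem_nhds hx) hder
    rw [heq.deriv_eq]
    have hfx := (hfd2 x hx).differentiableAt (isOpen_Ioi.mem_nhds hx)
    have hgx := (hgd2 x hx).differentiableAt (isOpen_Ioi.mem_nhds hx)
    rw [deriv_fun_sub hfx (hgx.const_mul c), deriv_const_mul c hgx]
  have h1 : h 1 = 0 := by simp [hh, hf1, hg1]
  have h1' : deriv h 1 = 0 := by
    rw [hder 1 (Set.mem_Ioi.mpr zero_lt_one), hf1', hg1']; ring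
  have hpp : ∀ x : ℝ, 0 < x → 0 ≤ deriv (deriv h) x := by
    intro x hx
    rw [hder2 x hx]
    linarith [hcc x hx]
  intro x hx
  have := nonneg_aux h hd hd2 h1 h1' hpp x hx
  simp only [hh] at this
  linarith

theorem comparison_lemma (f₁ f₂ : ℝ → ℝ) (α β : ℝ)
    (h1d : DifferentiableOn ℝ f₁ (Set.Ioi 0))
    (h1d2 : DifferentiableOn ℝ (deriv f₁) (Set.Ioi 0))
    (h2d : DifferentiableOn ℝ f₂ (Set.Ioi 0))
    (h2d2 : DifferentiableOn ℝ (deriv f₂) (Set.Ioi 0))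
    (h11 : f₁ 1 = 0) (h11' : deriv f₁ 1 = 0)
    (h21 : f₂ 1 = 0) (h21' : deriv f₂ 1 = 0)
    (h2pos : ∀ x : ℝ, 0 < x → 0 < deriv (deriv f₂) x)
    (hα : 0 ≤ α) (hαβ : α < β)
    (hratio : ∀ x : ℝ, 0 < x →
      α ≤ deriv (deriv f₁) x / deriv (deriv f₂) x ∧
      deriv (deriv f₁) x / deriv (deriv f₂) x ≤ β) :
    ∀ a b : ℝ, 0 < a → 0 < b →
      α * (a * f₂ (b / a)) ≤ a * f₁ (b / a) ∧
      a * f₁ (b / a) ≤ β * (a * f₂ (b / a)) := by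
  have hlow : ∀ x : ℝ, 0 < x → α * f₂ x ≤ f₁ x := by
    apply key f₁ f₂ α h1d h1d2 h2d h2d2 h11 h11' h21 h21'
    intro x hx
    exact (le_div_iff₀ (h2pos x hx)).mp (hratio x hx).1
  have hnegderiv : deriv (fun y => -f₁ y) = fun y => -deriv f₁ y := by
    funext y; exact deriv.neg
  have hhigh : ∀ x : ℝ, 0 < x → (-β) * f₂ x ≤ -f₁ x := by
    apply key (fun y => -f₁ y) f₂ (-β) h1d.neg _ h2d h2d2 _ _ h21 h21'
    · intro x hx
      have h2 : deriv (deriv fun y => -f₁ y) x = -deriv (deriv f₁) x := by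
        rw [hnegderiv]
        exact deriv.neg
      rw [h2]
      have := (div_le_iff₀ (h2pos x hx)).mp (hratio x hx).2
      linarith
    · rw [hnegderiv]; exact h1d2.neg
    · simp [h11]
    · rw [hnegderiv]; simp [h11']
  intro a b ha hb
  have hx : 0 < b / a := div_pos hb ha
  constructor
  · have := hlow (b / a) hx
    nlinarith
  · have := hhigh (b / a) hx
    nlinarith
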